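/- Let Γ be a connected subset of a metric space. Then the one-dimensional Hausdorff measure of Γ equals that of its closure: H¹(Γ) = H¹(closure(Γ)). -/

import Mathlib

open MeasureTheory Set Metric Filter
open scoped ENNReal NNReal

lemma key_local_aux {M : Type*} [MetricSpace M] [MeasurableSpace M] [BorelSpace M]
    {Γ : Set M} (hΓ : IsPreconnected Γ) {x z : M} (hx : x ∈ closure Γ) (hz : z ∈ Γ)
    {r : ℝ} (hr : 0 < r) (hrz : r ≤ dist x z) :
    ENNReal.ofReal r ≤ μH[1] (Γ ∩ Metric.ball x r) := by
  have hlip : LipschitzWith 1 (dist x) := LipschitzWith.dist_right x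
  have hconn : IsPreconnected ((dist x) '' Γ) :=
    hΓ.image _ (Continuous.continuousOn (by fun_prop))
  have hord : OrdConnected ((dist x) '' Γ) := hconn.ordConnected
  have hsub : Ioo 0 r ⊆ (dist x) '' (Γ ∩ Metric.ball x r) := by
    intro s hs
    obtain ⟨y, hyΓ, hy⟩ := Metric.mem_closure_iff.1 hx s hs.1
    have h1 : dist x y ∈ (dist x) '' Γ := ⟨y, hyΓ, rfl⟩
    have h2 : dist x z ∈ (dist x) '' Γ := ⟨z, hz, rfl⟩
    have hmem : s ∈ (dist x) '' Γ :=
      hord.out h1 h2 ⟨hy.le, le_trans hs.2.le hrz⟩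
    obtain ⟨w, hwΓ, hw⟩ := hmem
    exact ⟨w, ⟨hwΓ, by rw [Metric.mem_ball, dist_comm]; rw [hw]; exact hs.2⟩, hw⟩
  calc ENNReal.ofReal r = volume (Ioo (0:ℝ) r) := by rw [Real.volume_Ioo, sub_zero]
    _ = μH[1] (Ioo (0:ℝ) r) := by rw [MeasureTheory.hausdorffMeasure_real]
    _ ≤ μH[1] ((dist x) '' (Γ ∩ Metric.ball x r)) := measure_mono hsub
    _ ≤ μH[1] (Γ ∩ Metric.ball x r) := by
        simpa using hlip.hausdorffMeasure_image_le zero_le_one (Γ ∩ Metric.ball x r)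

lemma closure_diff_null_aux {M : Type*} [MetricSpace M] [MeasurableSpace M] [BorelSpace M]
    {Γ : Set M} (hfin : μH[1] Γ ≠ ⊤) {d0 : ℝ} (hd0 : 0 < d0)
    (key : ∀ x ∈ closure Γ, ∀ r : ℝ, 0 < r → r ≤ d0 →
      ENNReal.ofReal r ≤ μH[1] (Γ ∩ Metric.ball x r)) :
    μH[1] (closure Γ \ toMeasurable μH[1] Γ) = 0 := by
  set E := toMeasurable μH[1] Γ with hE
  have hEmeas : MeasurableSet E := measurableSet_toMeasurable _ _
  have hΓE : Γ ⊆ E := subset_toMeasurable _ _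
  have hEμ : μH[1] E = μH[1] Γ := measure_toMeasurable _
  set ν := μH[1].restrict E with hν
  haveI : IsFiniteMeasure ν := by
    constructor
    rw [hν, Measure.restrict_apply_univ, hEμ]
    exact hfin.lt_top
  set A := closure Γ \ E with hA
  have hAcl : A ⊆ closure Γ := diff_subset
  have hAmeas : MeasurableSet A := isClosed_closure.measurableSet.diff hEmeas
  have hνA : ν A = 0 := by
    rw [hν, Measure.restrict_apply hAmeas, diff_inter_self, measure_empty]
  -- lower bound for ν on closed balls centered in A
  have hball : ∀ x ∈ A, ∀ r : ℝ, 0 < r → r ≤ d0 →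
      ENNReal.ofReal r ≤ ν (Metric.closedBall x r) := by
    intro x hx r hr hrd
    refine le_trans (key x (hAcl hx) r hr hrd) ?_
    rw [hν, Measure.restrict_apply' hEmeas]
    exact measure_mono fun y hy => ⟨Metric.ball_subset_closedBall hy.2, hΓE hy.1⟩
  refine le_zero_iff.1 (ENNReal.le_of_forall_pos_le_add fun ε hε _ => ?_)
  rw [zero_add]
  have hε8 : (0:ℝ≥0∞) < ε / 8 :=
    ENNReal.div_pos (by exact_mod_cast hε.ne') (by norm_num)
  obtain ⟨U, hAU, hUopen, hUν⟩ := Set.exists_isOpen_lt_of_lt A (ε / 8) (by rw [hνA]; exact hε8)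
  have hρ : ∀ x ∈ A, ∃ ρ > 0, Metric.closedBall x ρ ⊆ U := by
    intro x hx
    obtain ⟨ρ, hρpos, hb⟩ := Metric.isOpen_iff.1 hUopen x (hAU hx)
    exact ⟨ρ / 2, by positivity, (Metric.closedBall_subset_ball (by linarith)).trans hb⟩
  choose! ρ hρpos hρU using hρ
  -- radii
  set r : ℕ → M → ℝ := fun n x => min (min d0 (1 / (8 * (n + 1)))) (ρ x) with hr
  have hrpos : ∀ n, ∀ x ∈ A, 0 < r n x := by
    intro n x hx
    refine lt_min (lt_min hd0 (by positivity)) (hρpos x hx)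
  have hrd0 : ∀ n x, r n x ≤ d0 := fun n x => (min_le_left _ _).trans (min_le_left _ _)
  have hrδ : ∀ n x, r n x ≤ 1 / (8 * (n + 1)) :=
    fun n x => (min_le_left _ _).trans (min_le_right _ _)
  have hrρ : ∀ n x, r n x ≤ ρ x := fun n x => min_le_right _ _
  have hballν : ∀ n, ∀ x ∈ A, ENNReal.ofReal (r n x) ≤ ν (Metric.closedBall x (r n x)) :=
    fun n x hx => hball x hx _ (hrpos n x hx) (hrd0 n x)
  -- the per-n covers
  have main : ∀ n : ℕ, ∃ u : Set M, u.Countable ∧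
      (A ⊆ ⋃ b : u, Metric.closedBall (b : M) (4 * r n b)) ∧
      (∀ b : u, EMetric.diam (Metric.closedBall (b : M) (4 * r n b)) ≤
        ENNReal.ofReal (1 / (n + 1))) ∧
      ∑' b : u, EMetric.diam (Metric.closedBall (b : M) (4 * r n b)) ≤ ε := by
    intro n
    obtain ⟨u, huA, hdisj, hcov⟩ :=
      Vitali.exists_disjoint_subfamily_covering_enlargement_closedBall A id (r n) d0
        (fun x _ => hrd0 n x) 4 (by norm_num)
    simp only [id] at hdisj hcov
    have hdisj' : Pairwise (Function.onFun Disjoint fun b : u => Metric.closedBall (b : M) (r n b)) := by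
      intro i j hij
      exact hdisj i.2 j.2 (fun h => hij (Subtype.ext h))
    have hmble : ∀ b : u, MeasurableSet (Metric.closedBall (b : M) (r n b)) :=
      fun b => measurableSet_closedBall
    have hsub_balls : ∀ b : u, Metric.closedBall (b : M) (r n b) ⊆ U :=
      fun b => (Metric.closedBall_subset_closedBall (hrρ n b)).trans (hρU b (huA b.2))
    have hνsum : ∑' b : u, ν (Metric.closedBall (b : M) (r n b)) ≤ ε / 8 := by
      refine le_trans (tsum_meas_le_meas_iUnion_of_disjoint ν hmble hdisj') ?_
      refine le_trans (measure_mono (iUnion_subset fun b => hsub_balls b)) hUν.le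
    have hcov' : A ⊆ ⋃ b : u, Metric.closedBall (b : M) (4 * r n b) := by
      intro x hx
      obtain ⟨b, hb, hsub⟩ := hcov x hx
      exact mem_iUnion.2 ⟨⟨b, hb⟩, hsub (Metric.mem_closedBall_self (hrpos n x hx).le)⟩
    have hdiam : ∀ b : u, EMetric.diam (Metric.closedBall (b : M) (4 * r n b)) ≤
        ENNReal.ofReal (8 * r n b) := by
      intro b
      refine EMetric.diam_le fun y hy z hz => ?_
      rw [edist_dist]
      refine ENNReal.ofReal_le_ofReal ?_
      have h1 := Metric.mem_closedBall.1 hy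
      have h2 := Metric.mem_closedBall.1 hz
      calc dist y z ≤ dist y (b : M) + dist (b : M) z := dist_triangle _ _ _
        _ ≤ 4 * r n b + 4 * r n b := by
            rw [dist_comm (b : M) z]; exact add_le_add h1 h2
        _ = 8 * r n b := by ring
    have hcnt : u.Countable := by
      have hpos : {b : u | 0 < ν (Metric.closedBall (b : M) (r n b))} = univ := by
        refine eq_univ_of_forall fun b => ?_
        exact lt_of_lt_of_le (ENNReal.ofReal_pos.2 (hrpos n b (huA b.2))) (hballν n b (huA b.2))
      have := MeasureTheory.Measure.countable_meas_pos_of_disjoint_of_meas_iUnion_ne_top ν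
        hmble hdisj' (measure_ne_top ν _)
      rw [hpos] at this
      have : Countable u := Set.countable_univ_iff.1 this
      exact Set.countable_coe_iff.1 this
    refine ⟨u, hcnt, hcov', fun b => ?_, ?_⟩
    · refine (hdiam b).trans (ENNReal.ofReal_le_ofReal ?_)
      have := hrδ n b
      have h8 : (0:ℝ) < 8 * ((n:ℝ) + 1) := by positivity
      calc (8:ℝ) * r n b ≤ 8 * (1 / (8 * (n + 1))) := by nlinarith [hrδ n (b:M)]
        _ = 1 / (n + 1) := by field_simp
    · calc ∑' b : u, EMetric.diam (Metric.closedBall (b : M) (4 * r n b))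
          ≤ ∑' b : u, ENNReal.ofReal (8 * r n b) := ENNReal.tsum_le_tsum hdiam
        _ = ∑' b : u, 8 * ENNReal.ofReal (r n b) := by
            congr 1; funext b
            rw [ENNReal.ofReal_mul (by norm_num : (0:ℝ) ≤ 8)]
            norm_num
        _ = 8 * ∑' b : u, ENNReal.ofReal (r n b) := ENNReal.tsum_mul_left
        _ ≤ 8 * ∑' b : u, ν (Metric.closedBall (b : M) (r n b)) := by
            gcongr with b
            exact hballν n b (huA b.2)
        _ ≤ 8 * (ε / 8) := by gcongr
        _ ≤ ε := ENNReal.mul_div_le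
  choose u hucnt hucov hudiam husum using main
  haveI : ∀ n, Countable (u n) := fun n => (hucnt n).to_subtype
  have hH := MeasureTheory.Measure.hausdorffMeasure_le_liminf_tsum (X := M) 1 A
    (fun n : ℕ => ENNReal.ofReal (1 / (n + 1)))
    (by
      have : Tendsto (fun n : ℕ => (1 : ℝ) / (n + 1)) atTop (nhds 0) :=
        tendsto_one_div_add_atTop_nhds_zero_nat
      have := ENNReal.tendsto_ofReal this
      rwa [ENNReal.ofReal_zero] at this)
    (fun n => fun b : u n => Metric.closedBall (b : M) (4 * r n b))
    (Eventually.of_forall fun n => hudiam n)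
    (Eventually.of_forall fun n => hucov n)
  refine hH.trans ?_
  have : ∀ n : ℕ, ∑' b : u n, EMetric.diam (Metric.closedBall (b : M) (4 * r n b)) ^ (1:ℝ) ≤ ε := by
    intro n
    simpa [ENNReal.rpow_one] using husum n
  refine le_trans (Filter.liminf_le_liminf (Eventually.of_forall this)) ?_
  simp [Filter.liminf_const]

/-- For a connected subset `Γ` of a metric space, `H¹(Γ) = H¹(closure Γ)`. -/
theorem hausdorff_length_closure {M : Type*} [MetricSpace M] [MeasurableSpace M]
    [BorelSpace M] (Γ : Set M) (hΓ : IsConnected Γ) :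
    μH[1] Γ = μH[1] (closure Γ) := by
  refine le_antisymm (measure_mono subset_closure) ?_
  by_cases hfin : μH[1] Γ = ⊤
  · rw [hfin]; exact le_top
  by_cases hsub : Γ.Subsingleton
  · obtain ⟨x, hx⟩ := hΓ.nonempty
    have hxs : Γ = {x} := hsub.eq_singleton_of_mem hx
    rw [hxs, closure_singleton]
  -- two distinct points
  rw [Set.not_subsingleton_iff] at hsub
  obtain ⟨a, ha, b, hb, hab⟩ := hsub
  have hdab : 0 < dist a b := dist_pos.2 hab
  set d0 := dist a b / 2 with hd0
  have hd0pos : 0 < d0 := by positivity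
  have key : ∀ x ∈ closure Γ, ∀ r : ℝ, 0 < r → r ≤ d0 →
      ENNReal.ofReal r ≤ μH[1] (Γ ∩ Metric.ball x r) := by
    intro x hx r hr hrd
    rcases le_or_gt d0 (dist x a) with h | h
    · exact key_local_aux hΓ.isPreconnected hx ha hr (hrd.trans h)
    · refine key_local_aux hΓ.isPreconnected hx hb hr (hrd.trans ?_)
      have := dist_triangle a x b
      rw [dist_comm a x] at this
      linarith [this]
  have hnull := closure_diff_null_aux hfin hd0pos key
  calc μH[1] (closure Γ)
      ≤ μH[1] (closure Γ \ toMeasurable μH[1] Γ) + μH[1] (toMeasurable μH[1] Γ) := by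
        refine le_trans (measure_mono ?_) (measure_union_le _ _)
        intro x hx
        by_cases hxE : x ∈ toMeasurable μH[1] Γ
        · exact Or.inr hxE
        · exact Or.inl ⟨hx, hxE⟩
    _ = μH[1] Γ := by rw [hnull, zero_add, measure_toMeasurable]
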